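/- (Convergence of the inertial PC-algorithm II with bounded-perturbation form, iPC II-2.) Let ν ∈ (0,1), γ ∈ (0,2), and let {α_k} ⊆ [0,1]. Let x^{-1}, x^0 ∈ H and let {x^k}, {y^k}, {β_k} satisfy, for every k ≥ 0, with w^k := x^k + α_k(x^k − x^{k−1}): β_k > 0 with inf_k β_k > 0; y^k = P_C(w^k − β_k F(w^k)); β_k‖F(w^k) − F(y^k)‖ ≤ ν‖w^k − y^k‖; d^k := (w^k − y^k) − β_k(F(w^k) − F(y^k)) ≠ 0; ρ_k := ⟨w^k − y^k, d^k⟩/‖d^k‖²; x^{k+1} = P_C(w^k − γ ρ_k β_k F(y^k)). If Σ_{k=0}^∞ α_k‖x^k − x^{k−1}‖ < +∞, then {x^k} converges weakly (i.e., ⟨x^k, u⟩ → ⟨x̂, u⟩ for every u ∈ H) to some point x̂ ∈ SOL(C,F). -/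

import Mathlib

open RealInnerProductSpace Filter Topology

lemma seq_limit_exists (a ε : ℕ → ℝ) (ha0 : ∀ k, 0 ≤ a k) (hε : ∀ k, 0 ≤ ε k)
    (hrec : ∀ k, a (k + 1) ≤ a k + ε k) (hsum : Summable ε) :
    ∃ l, Tendsto a atTop (𝓝 l) := by
  set T : ℕ → ℝ := fun k => ∑' j, ε (j + k) with hTdef
  have hTtend : Tendsto T atTop (𝓝 0) := tendsto_sum_nat_add ε
  have hTsummable : ∀ k, Summable fun j => ε (j + k) := fun k => (summable_nat_add_iff k).mpr hsum
  have hTnonneg : ∀ k, 0 ≤ T k := fun k => tsum_nonneg (fun j => hε _)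
  have hTrec : ∀ k, T k = ε k + T (k + 1) := by
    intro k
    have h0 := Summable.tsum_eq_zero_add (hTsummable k)
    have h1 : (fun j => ε (j + 1 + k)) = fun j => ε (j + (k + 1)) := by
      funext j; congr 1; ring
    simp only [hTdef, zero_add] at h0 ⊢
    rw [h0, h1]
  have hanti : Antitone (fun k => a k + T k) := by
    apply antitone_nat_of_succ_le
    intro k
    have := hrec k
    have := hTrec k
    linarith
  have hbdd : BddBelow (Set.range fun k => a k + T k) := by
    refine ⟨0, ?_⟩
    rintro r ⟨k, rfl⟩
    exact add_nonneg (ha0 k) (hTnonneg k)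
  have hbtend := tendsto_atTop_ciInf hanti hbdd
  refine ⟨⨅ i, a i + T i, ?_⟩
  have := hbtend.sub hTtend
  simpa using this

lemma exists_weak_subseq {H : Type*} [NormedAddCommGroup H] [InnerProductSpace ℝ H]
    [CompleteSpace H] (x : ℕ → H) (M : ℝ) (hM : ∀ k, ‖x k‖ ≤ M) :
    ∃ φ : ℕ → ℕ, StrictMono φ ∧ ∃ p : H,
      ∀ u : H, Tendsto (fun j => ⟪x (φ j), u⟫) atTop (𝓝 ⟪p, u⟫) := by
  have hM0 : 0 ≤ M := le_trans (norm_nonneg _) (hM 0)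
  -- diagonal extraction via sequential compactness of a product of intervals
  set S : ℕ → ℕ → ℝ := fun k n => ⟪x k, x n⟫ with hSdef
  have hSmem : ∀ k, S k ∈ Set.univ.pi fun _ : ℕ => Set.Icc (-(M * M)) (M * M) := by
    intro k
    intro n _
    have h1 : |⟪x k, x n⟫| ≤ M * M := by
      refine le_trans (abs_real_inner_le_norm _ _) ?_
      exact mul_le_mul (hM k) (hM n) (norm_nonneg _) hM0
    exact abs_le.mp h1
  have hcpt : IsCompact (Set.univ.pi fun _ : ℕ => Set.Icc (-(M * M)) (M * M)) :=
    isCompact_univ_pi fun _ => isCompact_Icc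
  obtain ⟨l, -, φ, hφ, hconv⟩ := hcpt.isSeqCompact hSmem
  have hcoord : ∀ n, Tendsto (fun j => ⟪x (φ j), x n⟫) atTop (𝓝 (l n)) := by
    intro n
    exact (tendsto_pi_nhds.mp hconv) n
  -- the set of vectors along which the subsequence weakly converges
  set A : Set H := {v : H | ∃ r, Tendsto (fun j => ⟪x (φ j), v⟫) atTop (𝓝 r)} with hAdef
  have hspan : ∀ v ∈ Submodule.span ℝ (Set.range x), v ∈ A := by
    intro v hv
    induction hv using Submodule.span_induction with
    | mem v hv => obtain ⟨n, rfl⟩ := hv; exact ⟨l n, hcoord n⟩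
    | zero => exact ⟨0, by simpa using tendsto_const_nhds⟩
    | add v w _ _ hv hw =>
      obtain ⟨r, hr⟩ := hv; obtain ⟨s, hs⟩ := hw
      exact ⟨r + s, by simpa [inner_add_right] using hr.add hs⟩
    | smul c v _ hv =>
      obtain ⟨r, hr⟩ := hv
      exact ⟨c * r, by simpa [real_inner_smul_right] using hr.const_mul c⟩
  have hclosure : ∀ v ∈ closure ((Submodule.span ℝ (Set.range x) : Submodule ℝ H) : Set H), v ∈ A := by
    intro v hv
    have hcauchy : CauchySeq fun j => ⟪x (φ j), v⟫ := by
      rw [Metric.cauchySeq_iff]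
      intro e he
      obtain ⟨v', hv'mem, hv'close⟩ := Metric.mem_closure_iff.mp hv (e / (3 * (M + 1)))
        (by positivity)
      obtain ⟨r, hr⟩ := hspan v' hv'mem
      have hc' : CauchySeq fun j => ⟪x (φ j), v'⟫ := hr.cauchySeq
      rw [Metric.cauchySeq_iff] at hc'
      obtain ⟨N, hN⟩ := hc' (e / 3) (by linarith)
      refine ⟨N, fun m hm n hn => ?_⟩
      have hbd : ∀ j, |⟪x (φ j), v⟫ - ⟪x (φ j), v'⟫| ≤ M * (e / (3 * (M + 1))) := by
        intro j
        have h1 : ⟪x (φ j), v⟫ - ⟪x (φ j), v'⟫ = ⟪x (φ j), v - v'⟫ := by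
          rw [inner_sub_right]
        rw [h1]
        refine le_trans (abs_real_inner_le_norm _ _) ?_
        have h2 : ‖v - v'‖ ≤ e / (3 * (M + 1)) := by
          rw [← dist_eq_norm]; exact le_of_lt hv'close
        exact mul_le_mul (hM _) h2 (norm_nonneg _) hM0
      have hMe : M * (e / (3 * (M + 1))) < e / 3 := by
        have h1 : (0:ℝ) < M + 1 := by linarith
        have h2 : 0 < e / (3 * (M + 1)) := by positivity
        have h3 : e / 3 = e / (3 * (M + 1)) * (M + 1) := by field_simp
        rw [h3]
        nlinarith
      have h3 := hN m hm n hn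
      rw [Real.dist_eq] at h3 ⊢
      have b1 := hbd m
      have b2 := hbd n
      have : |⟪x (φ m), v⟫ - ⟪x (φ n), v⟫| ≤
          |⟪x (φ m), v⟫ - ⟪x (φ m), v'⟫| + |⟪x (φ m), v'⟫ - ⟪x (φ n), v'⟫| +
          |⟪x (φ n), v'⟫ - ⟪x (φ n), v⟫| := by
        have := abs_sub_le (⟪x (φ m), v⟫) (⟪x (φ m), v'⟫) (⟪x (φ n), v⟫)
        have := abs_sub_le (⟪x (φ m), v'⟫) (⟪x (φ n), v'⟫) (⟪x (φ n), v⟫)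
        linarith [abs_sub_le (⟪x (φ m), v⟫) (⟪x (φ m), v'⟫) (⟪x (φ n), v⟫),
          abs_sub_le (⟪x (φ m), v'⟫) (⟪x (φ n), v'⟫) (⟪x (φ n), v⟫)]
      have b3 : |⟪x (φ n), v'⟫ - ⟪x (φ n), v⟫| ≤ M * (e / (3 * (M + 1))) := by
        rw [abs_sub_comm]; exact b2
      linarith
    obtain ⟨r, hr⟩ := cauchySeq_tendsto_of_complete hcauchy
    exact ⟨r, hr⟩
  set K : Submodule ℝ H := (Submodule.span ℝ (Set.range x)).topologicalClosure with hKdef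
  haveI : CompleteSpace K :=
    IsClosed.completeSpace_coe (hs := Submodule.isClosed_topologicalClosure _)
  have hxK : ∀ k, x k ∈ K :=
    fun k => Submodule.le_topologicalClosure _ (Submodule.subset_span ⟨k, rfl⟩)
  have hall : ∀ u : H, ∃ r, Tendsto (fun j => ⟪x (φ j), u⟫) atTop (𝓝 r) := by
    intro u
    set u₀ : H := (K.orthogonalProjectionOnto u : H) with hu₀def
    have hu₀A : u₀ ∈ A := by
      apply hclosure
      have hmem : u₀ ∈ K := (K.orthogonalProjectionOnto u).2
      have h2 : (K : Set H) = closure ((Submodule.span ℝ (Set.range x) : Submodule ℝ H) : Set H) :=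
        Submodule.topologicalClosure_coe _
      rw [← h2]
      exact hmem
    have horth : ∀ k, ⟪x k, u - u₀⟫ = 0 := by
      intro k
      have h1 : u - u₀ ∈ Kᗮ := Submodule.sub_starProjection_mem_orthogonal (K := K) u
      exact (Submodule.mem_orthogonal K (u - u₀)).mp h1 (x k) (hxK k)
    obtain ⟨r, hr⟩ := hu₀A
    refine ⟨r, hr.congr fun j => ?_⟩
    have := horth (φ j)
    rw [inner_sub_right] at this
    linarith
  choose g hg using hall
  have hmap_add : ∀ u v, g (u + v) = g u + g v := by
    intro u v
    exact tendsto_nhds_unique (hg (u + v)) (by simpa [inner_add_right] using (hg u).add (hg v))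
  have hmap_smul : ∀ (c : ℝ) u, g (c • u) = c * g u := by
    intro c u
    exact tendsto_nhds_unique (hg (c • u))
      (by simpa [real_inner_smul_right] using (hg u).const_mul c)
  have hbound : ∀ u, |g u| ≤ M * ‖u‖ := by
    intro u
    refine le_of_tendsto' (hg u).abs fun j => ?_
    refine le_trans (abs_real_inner_le_norm _ _) ?_
    exact mul_le_mul_of_nonneg_right (hM _) (norm_nonneg _)
  set gl : H →ₗ[ℝ] ℝ :=
    { toFun := g
      map_add' := hmap_add
      map_smul' := hmap_smul } with hgl
  set G : H →L[ℝ] ℝ := LinearMap.mkContinuous gl M (fun u => by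
    simpa [hgl, Real.norm_eq_abs] using hbound u) with hG
  refine ⟨φ, hφ, (InnerProductSpace.toDual ℝ H).symm G, fun u => ?_⟩
  have : ⟪(InnerProductSpace.toDual ℝ H).symm G, u⟫ = G u :=
    InnerProductSpace.toDual_symm_apply
  rw [this]
  exact hg u

set_option maxHeartbeats 1000000 in
/-- `xm k` plays the role of `x^{k-1}` (with `xm 0` the arbitrary starting point `x^{-1}`). -/
theorem stmt_17 {H : Type*} [NormedAddCommGroup H] [InnerProductSpace ℝ H]
    [CompleteSpace H]
    (C : Set H) (hCne : C.Nonempty) (hCcl : IsClosed C) (hCcv : Convex ℝ C)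
    (P : H → H) (hPmem : ∀ u : H, P u ∈ C)
    (hPchar : ∀ u : H, ∀ c ∈ C, ⟪u - P u, c - P u⟫ ≤ 0)
    (F : H → H) (hmono : ∀ u v : H, 0 ≤ ⟪F u - F v, u - v⟫)
    (L : ℝ) (hL : 0 < L) (hLip : ∀ u v : H, ‖F u - F v‖ ≤ L * ‖u - v‖)
    (hSOL : ∃ p ∈ C, ∀ z ∈ C, 0 ≤ ⟪F p, z - p⟫)
    (ν γ : ℝ) (hν : ν ∈ Set.Ioo (0 : ℝ) 1) (hγ : γ ∈ Set.Ioo (0 : ℝ) 2)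
    (α : ℕ → ℝ) (hα : ∀ k, α k ∈ Set.Icc (0 : ℝ) 1)
    (x xm y w : ℕ → H) (β : ℕ → ℝ) (d : ℕ → H) (ρ : ℕ → ℝ)
    (hxm : ∀ k, xm (k + 1) = x k)
    (hw : ∀ k, w k = x k + α k • (x k - xm k))
    (hβpos : ∀ k, 0 < β k) (hβinf : ∃ b > (0 : ℝ), ∀ k, b ≤ β k)
    (hy : ∀ k, y k = P (w k - β k • F (w k)))
    (hstep : ∀ k, β k * ‖F (w k) - F (y k)‖ ≤ ν * ‖w k - y k‖)
    (hd : ∀ k, d k = (w k - y k) - β k • (F (w k) - F (y k)))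
    (hdne : ∀ k, d k ≠ 0)
    (hρ : ∀ k, ρ k = ⟪w k - y k, d k⟫ / ‖d k‖ ^ 2)
    (hx : ∀ k, x (k + 1) = P (w k - (γ * ρ k * β k) • F (y k)))
    (hsum : Summable (fun k => α k * ‖x k - xm k‖)) :
    ∃ xhat, (xhat ∈ C ∧ ∀ z ∈ C, 0 ≤ ⟪F xhat, z - xhat⟫) ∧
      ∀ u : H, Filter.Tendsto (fun k => ⟪x k, u⟫) Filter.atTop (nhds ⟪xhat, u⟫) := by
  obtain ⟨hν0, hν1⟩ := hν
  obtain ⟨hγ0, hγ2⟩ := hγ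
  obtain ⟨b, hb0, hβb⟩ := hβinf
  obtain ⟨p, hpC, hpS⟩ := hSOL
  have hXC : ∀ k, x (k + 1) ∈ C := fun k => by rw [hx k]; exact hPmem _
  have hYC : ∀ k, y k ∈ C := fun k => by rw [hy k]; exact hPmem _
  -- projection inequality
  have projlem : ∀ (u q : H), q ∈ C → ‖P u - q‖ ^ 2 ≤ ‖u - q‖ ^ 2 - ‖u - P u‖ ^ 2 := by
    intro u q hq
    have h1 : ⟪u - P u, q - P u⟫ ≤ 0 := hPchar u q hq
    have h2 : (u - P u) - (q - P u) = u - q := by abel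
    have h3 := norm_sub_sq_real (u - P u) (q - P u)
    rw [h2] at h3
    have h5 : ‖P u - q‖ ^ 2 = ‖q - P u‖ ^ 2 := by rw [norm_sub_rev]
    nlinarith [h3, h1, h5]
  -- basic facts about the iterates
  have hwyne : ∀ k, w k ≠ y k := by
    intro k h
    apply hdne k
    rw [hd k, h]
    simp
  have hwypos : ∀ k, 0 < ‖w k - y k‖ := fun k =>
    norm_pos_iff.mpr (sub_ne_zero.mpr (hwyne k))
  have hdpos : ∀ k, 0 < ‖d k‖ := fun k => norm_pos_iff.mpr (hdne k)
  have hinner_wyd : ∀ k, (1 - ν) * ‖w k - y k‖ ^ 2 ≤ ⟪w k - y k, d k⟫ := by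
    intro k
    have h1 : ⟪w k - y k, d k⟫
        = ‖w k - y k‖ ^ 2 - β k * ⟪w k - y k, F (w k) - F (y k)⟫ := by
      rw [hd k, inner_sub_right, real_inner_smul_right, real_inner_self_eq_norm_sq]
    have h2 : ⟪w k - y k, F (w k) - F (y k)⟫ ≤ ‖w k - y k‖ * ‖F (w k) - F (y k)‖ :=
      real_inner_le_norm _ _
    have h3 := hstep k
    have h4 := hβpos k
    have h5 : β k * ⟪w k - y k, F (w k) - F (y k)⟫ ≤ ν * ‖w k - y k‖ ^ 2 := by
      calc β k * ⟪w k - y k, F (w k) - F (y k)⟫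
          ≤ β k * (‖w k - y k‖ * ‖F (w k) - F (y k)‖) :=
            mul_le_mul_of_nonneg_left h2 h4.le
        _ = ‖w k - y k‖ * (β k * ‖F (w k) - F (y k)‖) := by ring
        _ ≤ ‖w k - y k‖ * (ν * ‖w k - y k‖) :=
            mul_le_mul_of_nonneg_left h3 (norm_nonneg _)
        _ = ν * ‖w k - y k‖ ^ 2 := by ring
    linarith [h1.le, h1.ge]
  have hdnorm : ∀ k, ‖d k‖ ≤ (1 + ν) * ‖w k - y k‖ := by
    intro k
    rw [hd k]
    refine le_trans (norm_sub_le _ _) ?_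
    have h1 : ‖β k • (F (w k) - F (y k))‖ = β k * ‖F (w k) - F (y k)‖ := by
      rw [norm_smul, Real.norm_eq_abs, abs_of_pos (hβpos k)]
    rw [h1]
    have := hstep k
    linarith
  have hρnn : ∀ k, 0 ≤ ρ k := by
    intro k
    rw [hρ k]
    apply div_nonneg _ (by positivity)
    have h2 : 0 < (1 - ν) * ‖w k - y k‖ ^ 2 :=
      mul_pos (by linarith) (pow_pos (hwypos k) 2)
    linarith [hinner_wyd k]
  have hρd : ∀ k, ρ k * ‖d k‖ ^ 2 = ⟪w k - y k, d k⟫ := by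
    intro k
    have hne : ‖d k‖ ≠ 0 := (hdpos k).ne'
    rw [hρ k]
    field_simp
  set c₀ : ℝ := (1 - ν) ^ 2 / (1 + ν) ^ 2 with hc₀
  have hc₀pos : 0 < c₀ := by
    rw [hc₀]
    exact div_pos (pow_pos (by linarith) 2) (pow_pos (by linarith) 2)
  have hlower : ∀ k, c₀ * ‖w k - y k‖ ^ 2 ≤ ρ k ^ 2 * ‖d k‖ ^ 2 := by
    intro k
    have hD2 : 0 < ‖d k‖ ^ 2 := pow_pos (hdpos k) 2
    rw [← mul_le_mul_iff_left₀ hD2]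
    have e : ρ k ^ 2 * ‖d k‖ ^ 2 * ‖d k‖ ^ 2 = (ρ k * ‖d k‖ ^ 2) ^ 2 := by ring
    rw [e, hρd k]
    have h4 : ‖d k‖ ^ 2 ≤ ((1 + ν) * ‖w k - y k‖) ^ 2 :=
      pow_le_pow_left₀ (norm_nonneg _) (hdnorm k) 2
    have h5 : ((1 - ν) * ‖w k - y k‖ ^ 2) ^ 2 ≤ ⟪w k - y k, d k⟫ ^ 2 :=
      pow_le_pow_left₀ (mul_nonneg (by linarith) (sq_nonneg _)) (hinner_wyd k) 2
    have hgoal : c₀ * ‖w k - y k‖ ^ 2 * ‖d k‖ ^ 2 * (1 + ν) ^ 2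
        ≤ ⟪w k - y k, d k⟫ ^ 2 * (1 + ν) ^ 2 := by
      have hA1 : c₀ * ‖w k - y k‖ ^ 2 * ‖d k‖ ^ 2 * (1 + ν) ^ 2
          = (1 - ν) ^ 2 * ‖w k - y k‖ ^ 2 * ‖d k‖ ^ 2 := by
        rw [hc₀]; field_simp
      have hA2 : (1 - ν) ^ 2 * ‖w k - y k‖ ^ 2 * ‖d k‖ ^ 2
          ≤ (1 - ν) ^ 2 * ‖w k - y k‖ ^ 2 * ((1 + ν) * ‖w k - y k‖) ^ 2 :=
        mul_le_mul_of_nonneg_left h4 (by positivity)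
      have hA3 : ((1 - ν) * ‖w k - y k‖ ^ 2) ^ 2 * (1 + ν) ^ 2
          ≤ ⟪w k - y k, d k⟫ ^ 2 * (1 + ν) ^ 2 :=
        mul_le_mul_of_nonneg_right h5 (by positivity)
      have hA4 : (1 - ν) ^ 2 * ‖w k - y k‖ ^ 2 * ((1 + ν) * ‖w k - y k‖) ^ 2
          = ((1 - ν) * ‖w k - y k‖ ^ 2) ^ 2 * (1 + ν) ^ 2 := by ring
      linarith
    have hpos : (0:ℝ) < (1 + ν) ^ 2 := pow_pos (by linarith) 2
    nlinarith [hgoal]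
  -- key per-step inequality
  have key : ∀ q, q ∈ C → (∀ z ∈ C, 0 ≤ ⟪F q, z - q⟫) → ∀ k,
      ‖x (k + 1) - q‖ ^ 2 ≤ ‖w k - q‖ ^ 2 - γ * (2 - γ) * ρ k ^ 2 * ‖d k‖ ^ 2 := by
    intro q hqC hqS k
    have htnn : 0 ≤ γ * ρ k * β k :=
      mul_nonneg (mul_nonneg hγ0.le (hρnn k)) (hβpos k).le
    have hγρ : 0 ≤ γ * ρ k := mul_nonneg hγ0.le (hρnn k)
    have hA : ‖x (k + 1) - q‖ ^ 2 ≤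
        ‖(w k - (γ * ρ k * β k) • F (y k)) - q‖ ^ 2
          - ‖(w k - (γ * ρ k * β k) • F (y k)) - x (k + 1)‖ ^ 2 := by
      rw [hx k]
      exact projlem _ q hqC
    have e1 : ‖(w k - (γ * ρ k * β k) • F (y k)) - q‖ ^ 2
        = ‖w k - q‖ ^ 2 - 2 * ((γ * ρ k * β k) * ⟪w k - q, F (y k)⟫)
          + (γ * ρ k * β k) ^ 2 * ‖F (y k)‖ ^ 2 := by
      have h : (w k - (γ * ρ k * β k) • F (y k)) - q = (w k - q) - (γ * ρ k * β k) • F (y k) := by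
        abel
      rw [h, norm_sub_sq_real, real_inner_smul_right, norm_smul, Real.norm_eq_abs, mul_pow,
        sq_abs]
    have e2 : ‖(w k - (γ * ρ k * β k) • F (y k)) - x (k + 1)‖ ^ 2
        = ‖w k - x (k + 1)‖ ^ 2 - 2 * ((γ * ρ k * β k) * ⟪w k - x (k + 1), F (y k)⟫)
          + (γ * ρ k * β k) ^ 2 * ‖F (y k)‖ ^ 2 := by
      have h : (w k - (γ * ρ k * β k) • F (y k)) - x (k + 1)
          = (w k - x (k + 1)) - (γ * ρ k * β k) • F (y k) := by abel
      rw [h, norm_sub_sq_real, real_inner_smul_right, norm_smul, Real.norm_eq_abs, mul_pow,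
        sq_abs]
    have e3a : ⟪x (k + 1) - y k, F (y k)⟫ + ⟪y k - q, F (y k)⟫ = ⟪x (k + 1) - q, F (y k)⟫ := by
      rw [← inner_add_left, show (x (k + 1) - y k) + (y k - q) = x (k + 1) - q by abel]
    have e3b : ⟪w k - q, F (y k)⟫ - ⟪w k - x (k + 1), F (y k)⟫ = ⟪x (k + 1) - q, F (y k)⟫ := by
      rw [← inner_sub_left, show (w k - q) - (w k - x (k + 1)) = x (k + 1) - q by abel]
    have hyq : 0 ≤ ⟪F (y k), y k - q⟫ := by
      have h1 := hmono (y k) q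
      rw [inner_sub_left] at h1
      have h2 := hqS (y k) (hYC k)
      linarith
    have hd4 : ⟪d k, x (k + 1) - y k⟫ ≤ β k * ⟪F (y k), x (k + 1) - y k⟫ := by
      have h1 : ⟪d k, x (k + 1) - y k⟫
          = ⟪w k - y k, x (k + 1) - y k⟫ - β k * ⟪F (w k), x (k + 1) - y k⟫
            + β k * ⟪F (y k), x (k + 1) - y k⟫ := by
        rw [hd k]
        simp only [inner_sub_left, real_inner_smul_left]
        ring
      have h2 : ⟪w k - y k, x (k + 1) - y k⟫ - β k * ⟪F (w k), x (k + 1) - y k⟫ ≤ 0 := by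
        have h := hPchar (w k - β k • F (w k)) (x (k + 1)) (hXC k)
        rw [← hy k] at h
        have h' : (w k - β k • F (w k)) - y k = (w k - y k) - β k • F (w k) := by abel
        rw [h', inner_sub_left, real_inner_smul_left] at h
        linarith
      linarith [h1.le, h1.ge]
    have hsplit : ⟪d k, x (k + 1) - y k⟫ = ⟪d k, x (k + 1) - w k⟫ + ρ k * ‖d k‖ ^ 2 := by
      have h1 : ⟪d k, x (k + 1) - y k⟫ = ⟪d k, x (k + 1) - w k⟫ + ⟪d k, w k - y k⟫ := by
        rw [← inner_add_right, show (x (k + 1) - w k) + (w k - y k) = x (k + 1) - y k by abel]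
      rw [h1, real_inner_comm (w k - y k) (d k), ← hρd k]
    have e4 : ‖(x (k + 1) - w k) + (γ * ρ k) • d k‖ ^ 2
        = ‖x (k + 1) - w k‖ ^ 2 + 2 * ((γ * ρ k) * ⟪x (k + 1) - w k, d k⟫)
          + (γ * ρ k) ^ 2 * ‖d k‖ ^ 2 := by
      rw [norm_add_sq_real, real_inner_smul_right, norm_smul, Real.norm_eq_abs, mul_pow, sq_abs]
    have hsq : (0:ℝ) ≤ ‖(x (k + 1) - w k) + (γ * ρ k) • d k‖ ^ 2 := sq_nonneg _
    have e5 : ‖w k - x (k + 1)‖ ^ 2 = ‖x (k + 1) - w k‖ ^ 2 := by rw [norm_sub_rev]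
    -- scalar bookkeeping
    have e9 : (γ * ρ k * β k) * ⟪w k - q, F (y k)⟫ - (γ * ρ k * β k) * ⟪w k - x (k + 1), F (y k)⟫
        = (γ * ρ k * β k) * ⟪x (k + 1) - q, F (y k)⟫ := by
      rw [← e3b]; ring
    have e10 : (γ * ρ k * β k) * ⟪x (k + 1) - q, F (y k)⟫
        = (γ * ρ k * β k) * ⟪x (k + 1) - y k, F (y k)⟫
          + (γ * ρ k * β k) * ⟪y k - q, F (y k)⟫ := by
      rw [← e3a]; ring
    have m2 : 0 ≤ (γ * ρ k * β k) * ⟪y k - q, F (y k)⟫ :=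
      mul_nonneg htnn (by rw [real_inner_comm]; exact hyq)
    have e7 : (γ * ρ k * β k) * ⟪x (k + 1) - y k, F (y k)⟫
        = γ * ρ k * (β k * ⟪F (y k), x (k + 1) - y k⟫) := by
      rw [real_inner_comm (F (y k)) (x (k + 1) - y k)]; ring
    have m1 : γ * ρ k * ⟪d k, x (k + 1) - y k⟫
        ≤ γ * ρ k * (β k * ⟪F (y k), x (k + 1) - y k⟫) :=
      mul_le_mul_of_nonneg_left hd4 hγρ
    have e11 : γ * ρ k * ⟪d k, x (k + 1) - y k⟫
        = γ * ρ k * ⟪d k, x (k + 1) - w k⟫ + γ * ρ k * (ρ k * ‖d k‖ ^ 2) := by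
      rw [hsplit]; ring
    have e12 : γ * ρ k * ⟪d k, x (k + 1) - w k⟫ = γ * ρ k * ⟪x (k + 1) - w k, d k⟫ := by
      rw [real_inner_comm]
    rw [e1, e2] at hA
    linarith [hA, e9, e10, m2, e7, m1, e11, e12, hsq, e4, e5]
  -- Fejér-type monotonicity
  have htri : ∀ (q : H) (k : ℕ), ‖w k - q‖ ≤ ‖x k - q‖ + α k * ‖x k - xm k‖ := by
    intro q k
    have hεn : ‖w k - x k‖ = α k * ‖x k - xm k‖ := by
      rw [hw k, add_sub_cancel_left, norm_smul, Real.norm_eq_abs, abs_of_nonneg (hα k).1]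
    calc ‖w k - q‖ = ‖(w k - x k) + (x k - q)‖ := by
          rw [show (w k - x k) + (x k - q) = w k - q by abel]
      _ ≤ ‖w k - x k‖ + ‖x k - q‖ := norm_add_le _ _
      _ = ‖x k - q‖ + α k * ‖x k - xm k‖ := by rw [hεn]; ring
  have hG0 : ∀ k, 0 ≤ γ * (2 - γ) * ρ k ^ 2 * ‖d k‖ ^ 2 := fun k =>
    mul_nonneg (mul_nonneg (mul_nonneg hγ0.le (by linarith)) (sq_nonneg _)) (sq_nonneg _)
  have hfejer : ∀ q, q ∈ C → (∀ z ∈ C, 0 ≤ ⟪F q, z - q⟫) → ∀ k,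
      ‖x (k + 1) - q‖ ≤ ‖x k - q‖ + α k * ‖x k - xm k‖ := by
    intro q hqC hqS k
    have h1 := key q hqC hqS k
    have h6 : 0 ≤ ‖x k - q‖ + α k * ‖x k - xm k‖ :=
      add_nonneg (norm_nonneg _) (mul_nonneg (hα k).1 (norm_nonneg _))
    have h5 : ‖w k - q‖ ^ 2 ≤ (‖x k - q‖ + α k * ‖x k - xm k‖) ^ 2 :=
      pow_le_pow_left₀ (norm_nonneg _) (htri q k) 2
    have h4 : ‖x (k + 1) - q‖ ^ 2 ≤ (‖x k - q‖ + α k * ‖x k - xm k‖) ^ 2 := by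
      have := hG0 k
      linarith
    have h7 := Real.sqrt_le_sqrt h4
    rwa [Real.sqrt_sq (norm_nonneg _), Real.sqrt_sq h6] at h7
  have hlim : ∀ q, q ∈ C → (∀ z ∈ C, 0 ≤ ⟪F q, z - q⟫) →
      ∃ l, Filter.Tendsto (fun k => ‖x k - q‖) Filter.atTop (nhds l) := fun q hqC hqS =>
    seq_limit_exists _ _ (fun k => norm_nonneg _)
      (fun k => mul_nonneg (hα k).1 (norm_nonneg _)) (hfejer q hqC hqS) hsum
  -- uniform bound
  have hMp0 : 0 ≤ ‖x 0 - p‖ + ∑' j, α j * ‖x j - xm j‖ :=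
    add_nonneg (norm_nonneg _) (tsum_nonneg fun j => mul_nonneg (hα j).1 (norm_nonneg _))
  have hbnd : ∀ k, ‖x k - p‖ ≤ ‖x 0 - p‖ + ∑' j, α j * ‖x j - xm j‖ := by
    intro k
    have h1 : ∀ m : ℕ, ‖x m - p‖ ≤ ‖x 0 - p‖ + ∑ j ∈ Finset.range m, α j * ‖x j - xm j‖ := by
      intro m
      induction m with
      | zero => simp
      | succ n ih =>
        have := hfejer p hpC hpS n
        rw [Finset.sum_range_succ]
        linarith
    refine le_trans (h1 k) ?_
    have h2 : ∑ j ∈ Finset.range k, α j * ‖x j - xm j‖ ≤ ∑' j, α j * ‖x j - xm j‖ :=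
      Summable.sum_le_tsum _ (fun j _ => mul_nonneg (hα j).1 (norm_nonneg _)) hsum
    linarith
  have hMx : ∀ k, ‖x k‖ ≤ (‖x 0 - p‖ + ∑' j, α j * ‖x j - xm j‖) + ‖p‖ := by
    intro k
    have h1 : ‖x k‖ ≤ ‖x k - p‖ + ‖p‖ := by
      calc ‖x k‖ = ‖(x k - p) + p‖ := by rw [sub_add_cancel]
        _ ≤ ‖x k - p‖ + ‖p‖ := norm_add_le _ _
    linarith [hbnd k]
  -- ‖w k - y k‖ → 0
  have hεt : Filter.Tendsto (fun k => α k * ‖x k - xm k‖) Filter.atTop (nhds 0) :=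
    hsum.tendsto_atTop_zero
  obtain ⟨la, hla⟩ := hlim p hpC hpS
  have hshift : Filter.Tendsto (fun k => ‖x (k + 1) - p‖) Filter.atTop (nhds la) :=
    hla.comp (Filter.tendsto_add_atTop_nat 1)
  have hRHS : Filter.Tendsto
      (fun k => (‖x k - p‖ + α k * ‖x k - xm k‖) ^ 2 - ‖x (k + 1) - p‖ ^ 2)
      Filter.atTop (nhds 0) := by
    have h1 := ((hla.add hεt).pow 2).sub (hshift.pow 2)
    simpa using h1
  have hsand : ∀ k, γ * (2 - γ) * c₀ * ‖w k - y k‖ ^ 2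
      ≤ (‖x k - p‖ + α k * ‖x k - xm k‖) ^ 2 - ‖x (k + 1) - p‖ ^ 2 := by
    intro k
    have h1 := key p hpC hpS k
    have h2 := hlower k
    have h3 : ‖w k - p‖ ^ 2 ≤ (‖x k - p‖ + α k * ‖x k - xm k‖) ^ 2 :=
      pow_le_pow_left₀ (norm_nonneg _) (htri p k) 2
    have h4 : γ * (2 - γ) * (c₀ * ‖w k - y k‖ ^ 2) ≤ γ * (2 - γ) * (ρ k ^ 2 * ‖d k‖ ^ 2) :=
      mul_le_mul_of_nonneg_left h2 (mul_nonneg hγ0.le (by linarith))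
    nlinarith [h1, h3, h4]
  have hwy0 : Filter.Tendsto (fun k => ‖w k - y k‖) Filter.atTop (nhds 0) := by
    have hc1 : 0 < γ * (2 - γ) * c₀ := mul_pos (mul_pos hγ0 (by linarith)) hc₀pos
    have h0 : Filter.Tendsto (fun k => γ * (2 - γ) * c₀ * ‖w k - y k‖ ^ 2)
        Filter.atTop (nhds 0) :=
      squeeze_zero (fun k => mul_nonneg hc1.le (sq_nonneg _)) hsand hRHS
    have h2 : Filter.Tendsto (fun k => ‖w k - y k‖ ^ 2) Filter.atTop (nhds 0) := by
      have h3 := h0.const_mul (γ * (2 - γ) * c₀)⁻¹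
      simp only [← mul_assoc, inv_mul_cancel₀ hc1.ne', one_mul, mul_zero] at h3
      exact h3
    have h4 := (Real.continuous_sqrt.tendsto 0).comp h2
    simp only [Real.sqrt_zero] at h4
    exact h4.congr fun k => Real.sqrt_sq (norm_nonneg _)
  have hxy0 : Filter.Tendsto (fun k => ‖x k - y k‖) Filter.atTop (nhds 0) := by
    apply squeeze_zero (fun k => norm_nonneg _)
      (g := fun k => α k * ‖x k - xm k‖ + ‖w k - y k‖)
    · intro k
      have hεn : ‖x k - w k‖ = α k * ‖x k - xm k‖ := by
        rw [norm_sub_rev, hw k, add_sub_cancel_left, norm_smul, Real.norm_eq_abs,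
          abs_of_nonneg (hα k).1]
      calc ‖x k - y k‖ = ‖(x k - w k) + (w k - y k)‖ := by
            rw [show (x k - w k) + (w k - y k) = x k - y k by abel]
        _ ≤ ‖x k - w k‖ + ‖w k - y k‖ := norm_add_le _ _
        _ = α k * ‖x k - xm k‖ + ‖w k - y k‖ := by rw [hεn]
    · simpa using hεt.add hwy0
  -- every weak cluster point is a solution
  have cluster : ∀ n : ℕ → ℕ, Filter.Tendsto n Filter.atTop Filter.atTop → ∀ q : H,
      (∀ u : H, Filter.Tendsto (fun j => ⟪x (n j), u⟫) Filter.atTop (nhds ⟪q, u⟫)) →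
      q ∈ C ∧ ∀ z ∈ C, 0 ≤ ⟪F q, z - q⟫ := by
    intro n hn q hq
    have hyweak : ∀ u : H, Filter.Tendsto (fun j => ⟪y (n j), u⟫) Filter.atTop (nhds ⟪q, u⟫) := by
      intro u
      have h1 : Filter.Tendsto (fun j => ⟪y (n j) - x (n j), u⟫) Filter.atTop (nhds 0) := by
        apply squeeze_zero_norm (a := fun j => ‖x (n j) - y (n j)‖ * ‖u‖)
        · intro j
          calc ‖⟪y (n j) - x (n j), u⟫‖ = |⟪y (n j) - x (n j), u⟫| := Real.norm_eq_abs _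
            _ ≤ ‖y (n j) - x (n j)‖ * ‖u‖ := abs_real_inner_le_norm _ _
            _ = ‖x (n j) - y (n j)‖ * ‖u‖ := by rw [norm_sub_rev]
        · simpa using (hxy0.comp hn).mul_const ‖u‖
      have h2 := (hq u).add h1
      rw [add_zero] at h2
      refine h2.congr fun j => ?_
      rw [← inner_add_left, show x (n j) + (y (n j) - x (n j)) = y (n j) by abel]
    have hqC' : q ∈ C := by
      have h1 : ∀ j, ⟪y (n j) - P q, q - P q⟫ ≤ 0 := by
        intro j
        have h := hPchar q (y (n j)) (hYC (n j))
        rwa [real_inner_comm] at h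
      have h2 : Filter.Tendsto (fun j => ⟪y (n j) - P q, q - P q⟫) Filter.atTop
          (nhds ⟪q - P q, q - P q⟫) := by
        have h4 := (hyweak (q - P q)).sub (tendsto_const_nhds (x := ⟪(P q : H), q - P q⟫))
        have h5 : (⟪q - P q, q - P q⟫ : ℝ) = ⟪q, q - P q⟫ - ⟪(P q : H), q - P q⟫ :=
          inner_sub_left _ _ _
        rw [h5]
        exact h4.congr fun j => (inner_sub_left _ _ _).symm
      have h6 := le_of_tendsto h2 (Filter.Eventually.of_forall h1)
      have h7 : ‖q - P q‖ ^ 2 ≤ 0 := by rw [← real_inner_self_eq_norm_sq]; exact h6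
      have h8 : ‖q - P q‖ ^ 2 = 0 := le_antisymm h7 (sq_nonneg _)
      have h9 : q - P q = 0 := by
        have := pow_eq_zero_iff (n := 2) (by norm_num) |>.mp h8
        exact norm_eq_zero.mp this
      have h10 : q = P q := sub_eq_zero.mp h9
      rw [h10]
      exact hPmem q
    refine ⟨hqC', ?_⟩
    -- Minty-type property at q
    have hMinty0 : ∀ z ∈ C, 0 ≤ ⟪F z, z - q⟫ := by
      intro z hz
      have hMlb : ∀ m : ℕ,
          -((1 + ν) * ‖w m - y m‖ *
            (‖z‖ + ((‖x 0 - p‖ + ∑' j, α j * ‖x j - xm j‖) + ‖p‖) + ‖x m - y m‖)) / b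
          ≤ ⟪F z, z - y m⟫ := by
        intro m
        have hβm := hβpos m
        have h1 : ⟪F (y m), z - y m⟫ ≤ ⟪F z, z - y m⟫ := by
          have h := hmono z (y m)
          rw [inner_sub_left] at h
          linarith
        have h2 : ⟪w m - y m, z - y m⟫ - β m * ⟪F (w m), z - y m⟫ ≤ 0 := by
          have h := hPchar (w m - β m • F (w m)) z hz
          rw [← hy m] at h
          have h' : (w m - β m • F (w m)) - y m = (w m - y m) - β m • F (w m) := by abel
          rw [h', inner_sub_left, real_inner_smul_left] at h
          linarith
        have h3 : β m * ⟪F (w m) - F (y m), z - y m⟫ ≤ ν * ‖w m - y m‖ * ‖z - y m‖ := by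
          have ha := abs_real_inner_le_norm (F (w m) - F (y m)) (z - y m)
          have hb2 := hstep m
          have hc : ⟪F (w m) - F (y m), z - y m⟫ ≤ ‖F (w m) - F (y m)‖ * ‖z - y m‖ :=
            le_trans (le_abs_self _) ha
          calc β m * ⟪F (w m) - F (y m), z - y m⟫
              ≤ β m * (‖F (w m) - F (y m)‖ * ‖z - y m‖) :=
                mul_le_mul_of_nonneg_left hc hβm.le
            _ = (β m * ‖F (w m) - F (y m)‖) * ‖z - y m‖ := by ring
            _ ≤ (ν * ‖w m - y m‖) * ‖z - y m‖ :=
                mul_le_mul_of_nonneg_right hb2 (norm_nonneg _)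
            _ = ν * ‖w m - y m‖ * ‖z - y m‖ := by ring
        have h4 : ⟪w m - y m, z - y m⟫ - ν * ‖w m - y m‖ * ‖z - y m‖
            ≤ β m * ⟪F (y m), z - y m⟫ := by
          have e : β m * ⟪F (y m), z - y m⟫
              = β m * ⟪F (w m), z - y m⟫ - β m * ⟪F (w m) - F (y m), z - y m⟫ := by
            rw [inner_sub_left]; ring
          linarith [e.le, e.ge]
        have h5 : -(‖w m - y m‖ * ‖z - y m‖) ≤ ⟪w m - y m, z - y m⟫ := by
          have ha := abs_real_inner_le_norm (w m - y m) (z - y m)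
          have hb2 := neg_abs_le (⟪w m - y m, z - y m⟫ : ℝ)
          linarith
        have h6 : ‖z - y m‖ ≤ ‖z‖ + ((‖x 0 - p‖ + ∑' j, α j * ‖x j - xm j‖) + ‖p‖)
            + ‖x m - y m‖ := by
          calc ‖z - y m‖ = ‖(z - x m) + (x m - y m)‖ := by
                rw [show (z - x m) + (x m - y m) = z - y m by abel]
            _ ≤ ‖z - x m‖ + ‖x m - y m‖ := norm_add_le _ _
            _ ≤ (‖z‖ + ‖x m‖) + ‖x m - y m‖ := by
                have := norm_sub_le z (x m); linarith
            _ ≤ ‖z‖ + ((‖x 0 - p‖ + ∑' j, α j * ‖x j - xm j‖) + ‖p‖) + ‖x m - y m‖ := by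
                have := hMx m; linarith
        have hAnn : 0 ≤ (1 + ν) * ‖w m - y m‖ *
            (‖z‖ + ((‖x 0 - p‖ + ∑' j, α j * ‖x j - xm j‖) + ‖p‖) + ‖x m - y m‖) := by
          have h7 : 0 ≤ ‖z‖ + ((‖x 0 - p‖ + ∑' j, α j * ‖x j - xm j‖) + ‖p‖) + ‖x m - y m‖ := by
            have := norm_nonneg z
            have := norm_nonneg p
            have := norm_nonneg (x m - y m)
            linarith [hMp0]
          exact mul_nonneg (mul_nonneg (by linarith) (norm_nonneg _)) h7
        have h7 : -((1 + ν) * ‖w m - y m‖ *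
            (‖z‖ + ((‖x 0 - p‖ + ∑' j, α j * ‖x j - xm j‖) + ‖p‖) + ‖x m - y m‖))
            ≤ β m * ⟪F (y m), z - y m⟫ := by
          have h8 : (1 + ν) * ‖w m - y m‖ * ‖z - y m‖
              ≤ (1 + ν) * ‖w m - y m‖ *
                (‖z‖ + ((‖x 0 - p‖ + ∑' j, α j * ‖x j - xm j‖) + ‖p‖) + ‖x m - y m‖) :=
            mul_le_mul_of_nonneg_left h6 (mul_nonneg (by linarith) (norm_nonneg _))
          have h9 : 0 ≤ ν * ‖w m - y m‖ * ‖z - y m‖ :=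
            mul_nonneg (mul_nonneg hν0.le (norm_nonneg _)) (norm_nonneg _)
          nlinarith [h4, h5, h8]
        have h10 : -((1 + ν) * ‖w m - y m‖ *
            (‖z‖ + ((‖x 0 - p‖ + ∑' j, α j * ‖x j - xm j‖) + ‖p‖) + ‖x m - y m‖)) / β m
            ≤ ⟪F (y m), z - y m⟫ := by
          rw [div_le_iff₀ hβm]
          nlinarith [h7]
        have h11 : -((1 + ν) * ‖w m - y m‖ *
            (‖z‖ + ((‖x 0 - p‖ + ∑' j, α j * ‖x j - xm j‖) + ‖p‖) + ‖x m - y m‖)) / b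
            ≤ -((1 + ν) * ‖w m - y m‖ *
            (‖z‖ + ((‖x 0 - p‖ + ∑' j, α j * ‖x j - xm j‖) + ‖p‖) + ‖x m - y m‖)) / β m := by
          rw [div_le_div_iff₀ hb0 hβm]
          nlinarith [mul_le_mul_of_nonneg_left (hβb m) hAnn]
        linarith
      have hflim : Filter.Tendsto (fun j => ⟪F z, z - y (n j)⟫) Filter.atTop
          (nhds ⟪F z, z - q⟫) := by
        have h2 : Filter.Tendsto (fun j => ⟪F z, z⟫ - ⟪y (n j), F z⟫) Filter.atTop
            (nhds (⟪F z, z⟫ - ⟪q, F z⟫)) :=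
          tendsto_const_nhds.sub (hyweak (F z))
        have h3 : (⟪F z, z - q⟫ : ℝ) = ⟪F z, z⟫ - ⟪q, F z⟫ := by
          rw [inner_sub_right, real_inner_comm (F z) q]
        rw [h3]
        exact h2.congr fun j => by rw [inner_sub_right, real_inner_comm (F z) (y (n j))]
      have hglim : Filter.Tendsto (fun j =>
          -((1 + ν) * ‖w (n j) - y (n j)‖ *
            (‖z‖ + ((‖x 0 - p‖ + ∑' j, α j * ‖x j - xm j‖) + ‖p‖) + ‖x (n j) - y (n j)‖)) / b)
          Filter.atTop (nhds 0) := by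
        have h1 : Filter.Tendsto (fun j => ‖w (n j) - y (n j)‖) Filter.atTop (nhds 0) :=
          hwy0.comp hn
        have h2 : Filter.Tendsto (fun j => ‖x (n j) - y (n j)‖) Filter.atTop (nhds 0) :=
          hxy0.comp hn
        have h3 := (((h1.const_mul (1 + ν)).mul
          ((tendsto_const_nhds
            (x := ‖z‖ + ((‖x 0 - p‖ + ∑' j, α j * ‖x j - xm j‖) + ‖p‖))).add h2)).neg).div_const b
        simpa using h3
      exact le_of_tendsto_of_tendsto' hglim hflim (fun j => hMlb (n j))
    intro z hz
    have hseq : ∀ j : ℕ, 0 ≤ ⟪F (q + (1 / (j + 1 : ℝ)) • (z - q)), z - q⟫ := by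
      intro j
      have hs0 : 0 < (1 / (j + 1 : ℝ)) := by positivity
      have hs1 : (1 / (j + 1 : ℝ)) ≤ 1 := by
        rw [div_le_one (by positivity)]
        have : (0:ℝ) ≤ (j:ℝ) := Nat.cast_nonneg j
        linarith
      have hmem : q + (1 / (j + 1 : ℝ)) • (z - q) ∈ C := by
        have h := hCcv hqC' hz (by linarith : (0:ℝ) ≤ 1 - (1 / (j + 1 : ℝ))) hs0.le (by ring)
        have he : (1 - (1 / (j + 1 : ℝ))) • q + (1 / (j + 1 : ℝ)) • z
            = q + (1 / (j + 1 : ℝ)) • (z - q) := by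
          rw [sub_smul, smul_sub, one_smul]; abel
        rwa [he] at h
      have h0 := hMinty0 (q + (1 / (j + 1 : ℝ)) • (z - q)) hmem
      rw [show q + (1 / (j + 1 : ℝ)) • (z - q) - q = (1 / (j + 1 : ℝ)) • (z - q) by abel,
        real_inner_smul_right] at h0
      exact (mul_nonneg_iff_of_pos_left hs0).mp h0
    have hlim2 : Filter.Tendsto
        (fun j : ℕ => ⟪F (q + (1 / (j + 1 : ℝ)) • (z - q)), z - q⟫) Filter.atTop
        (nhds ⟪F q, z - q⟫) := by
      have h1 : Filter.Tendsto
          (fun j : ℕ => ⟪F (q + (1 / (j + 1 : ℝ)) • (z - q)) - F q, z - q⟫) Filter.atTop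
          (nhds 0) := by
        apply squeeze_zero_norm (a := fun j : ℕ => L * ((1 / (j + 1 : ℝ)) * ‖z - q‖) * ‖z - q‖)
        · intro j
          calc ‖⟪F (q + (1 / (j + 1 : ℝ)) • (z - q)) - F q, z - q⟫‖
              ≤ ‖F (q + (1 / (j + 1 : ℝ)) • (z - q)) - F q‖ * ‖z - q‖ := by
                rw [Real.norm_eq_abs]; exact abs_real_inner_le_norm _ _
            _ ≤ (L * ‖q + (1 / (j + 1 : ℝ)) • (z - q) - q‖) * ‖z - q‖ :=
                mul_le_mul_of_nonneg_right (hLip _ _) (norm_nonneg _)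
            _ = L * ((1 / (j + 1 : ℝ)) * ‖z - q‖) * ‖z - q‖ := by
                rw [show q + (1 / (j + 1 : ℝ)) • (z - q) - q = (1 / (j + 1 : ℝ)) • (z - q) by
                    abel, norm_smul, Real.norm_eq_abs, abs_of_pos (by positivity)]
        · have h2 : Filter.Tendsto (fun j : ℕ => 1 / (j + 1 : ℝ)) Filter.atTop (nhds 0) :=
            tendsto_one_div_add_atTop_nhds_zero_nat
          have h3 := ((h2.mul_const ‖z - q‖).const_mul L).mul_const ‖z - q‖
          simpa using h3
      have h4 := h1.add (tendsto_const_nhds (x := (⟪F q, z - q⟫ : ℝ)))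
      rw [zero_add] at h4
      refine h4.congr fun j => ?_
      rw [inner_sub_left]; ring
    exact ge_of_tendsto' hlim2 hseq
  -- extract a weak cluster point
  obtain ⟨φ, hφmono, xhat, hxhat⟩ :=
    exists_weak_subseq x ((‖x 0 - p‖ + ∑' j, α j * ‖x j - xm j‖) + ‖p‖) hMx
  have hφtop : Filter.Tendsto φ Filter.atTop Filter.atTop := hφmono.tendsto_atTop
  obtain ⟨hxhatC, hxhatS⟩ := cluster φ hφtop xhat hxhat
  refine ⟨xhat, ⟨hxhatC, hxhatS⟩, ?_⟩
  intro u
  obtain ⟨l1, hl1⟩ := hlim xhat hxhatC hxhatS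
  apply Filter.tendsto_of_subseq_tendsto
  intro ns hns
  obtain ⟨ms, hmsmono, q, hq⟩ :=
    exists_weak_subseq (fun j => x (ns j)) ((‖x 0 - p‖ + ∑' j, α j * ‖x j - xm j‖) + ‖p‖)
      (fun j => hMx _)
  have hcomp : Filter.Tendsto (fun j => ns (ms j)) Filter.atTop Filter.atTop :=
    hns.comp hmsmono.tendsto_atTop
  have hq' : ∀ u : H, Filter.Tendsto (fun j => ⟪x (ns (ms j)), u⟫) Filter.atTop (nhds ⟪q, u⟫) :=
    hq
  obtain ⟨hqC, hqS⟩ := cluster (fun j => ns (ms j)) hcomp q hq'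
  obtain ⟨l2, hl2⟩ := hlim q hqC hqS
  have hip : Filter.Tendsto (fun k => ⟪x k, xhat - q⟫) Filter.atTop
      (nhds ((l2 ^ 2 - l1 ^ 2 + (‖xhat‖ ^ 2 - ‖q‖ ^ 2)) / 2)) := by
    have h1 := (((hl2.pow 2).sub (hl1.pow 2)).add_const (‖xhat‖ ^ 2 - ‖q‖ ^ 2)).div_const 2
    refine h1.congr fun k => ?_
    have e1 := norm_sub_sq_real (x k) q
    have e2 := norm_sub_sq_real (x k) xhat
    have e3 : (⟪x k, xhat - q⟫ : ℝ) = ⟪x k, xhat⟫ - ⟪x k, q⟫ := inner_sub_right _ _ _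
    rw [e3]
    linear_combination (e1 - e2) / 2
  have hc1 : Filter.Tendsto (fun j => ⟪x (φ j), xhat - q⟫) Filter.atTop
      (nhds ⟪xhat, xhat - q⟫) := hxhat _
  have hc2 : Filter.Tendsto (fun j => ⟪x (ns (ms j)), xhat - q⟫) Filter.atTop
      (nhds ⟪q, xhat - q⟫) := hq' _
  have hu1 : (⟪xhat, xhat - q⟫ : ℝ) = (l2 ^ 2 - l1 ^ 2 + (‖xhat‖ ^ 2 - ‖q‖ ^ 2)) / 2 :=
    tendsto_nhds_unique hc1 ((hip.comp hφtop).congr fun j => rfl)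
  have hu2 : (⟪q, xhat - q⟫ : ℝ) = (l2 ^ 2 - l1 ^ 2 + (‖xhat‖ ^ 2 - ‖q‖ ^ 2)) / 2 :=
    tendsto_nhds_unique hc2 ((hip.comp hcomp).congr fun j => rfl)
  have heq : xhat = q := by
    have h1 : (⟪xhat - q, xhat - q⟫ : ℝ) = 0 := by
      rw [inner_sub_left, hu1, hu2]; ring
    have h2 : xhat - q = 0 := inner_self_eq_zero.mp h1
    have := sub_eq_zero.mp h2
    exact this
  exact ⟨ms, heq ▸ hq' u⟩
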